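/- In the modified game G' built from a monotone cubic formula φ, if φ has no 1-in-3 satisfying assignment, then the unique ε-well-supported Nash equilibrium of G' is the pure profile in which every player plays Out. -/

import Mathlib

set_option linter.unusedSectionVars false
namespace Stmt7

/-- A monotone cubic formula with exactly three distinct variables per clause. -/
structure CubicFormula (V C : Type) where
  var : C → Fin 3 → V
  inj : ∀ c, Function.Injective (var c)

variable {V C : Type} [Fintype V] [Fintype C] [DecidableEq V] [DecidableEq C]

/-- α is a 1-in-3 satisfying assignment: exactly one variable per clause is true. -/
def OneInThree (F : CubicFormula V C) (α : V → Bool) : Prop :=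
  ∀ c : C, (Finset.univ.filter (fun j : Fin 3 => α (F.var c j) = true)).card = 1

/-- Each variable occurs in exactly three clause positions (the formula is cubic). -/
def Cubic (F : CubicFormula V C) : Prop :=
  ∀ v : V, (Finset.univ.filter (fun cj : C × Fin 3 => F.var cj.1 cj.2 = v)).card = 3

/-- The bipartite interaction graph between variable players and clause players. -/
def interactionGraph (F : CubicFormula V C) : SimpleGraph (V ⊕ C) :=
  SimpleGraph.fromRel (fun a b =>
    match a, b with
    | Sum.inl v, Sum.inr c => ∃ j, F.var c j = v
    | _, _ => False)

/-- Payoff to clause player `c_j` on the edge with its `j`-th variable, when the clause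
plays `s` (`none` = Out) and the variable plays `b` (`none` = Out). -/
noncomputable def edgeClausePay (cc κ : ℝ) (j : Fin 3) (s : Option (Fin 3)) (b : Option Bool) : ℝ :=
  match s, b with
  | none, _ => 1 / 3
  | some t, some true => if t = j then κ else 0
  | some _, some false => cc * κ
  | some _, none => 0

/-- Payoff to the variable player on the edge where it is the `j`-th variable of a
clause playing `s`, when the variable plays `b` (`none` = Out). -/
noncomputable def edgeVarPay (ε : ℝ) (j : Fin 3) (s : Option (Fin 3)) (b : Option Bool) : ℝ :=
  match b, s with
  | none, _ => 1 / 3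
  | some true, s => if s = some j then 1 / 3 - ε / 3 else 0
  | some false, some t => if t = j then 0 else 1 / 3 - ε / 3
  | some false, none => 0

/-- Payoff of clause player `c` for pure strategy `s`, against the variable players'
mixed strategies `p`. -/
noncomputable def clausePure (F : CubicFormula V C) (cc κ : ℝ) (p : V → Option Bool → ℝ) (c : C)
    (s : Option (Fin 3)) : ℝ :=
  ∑ j : Fin 3, ∑ b : Option Bool, p (F.var c j) b * edgeClausePay cc κ j s b

/-- Payoff of variable player `v` for pure strategy `b`, against the clause players'
mixed strategies `q`. -/
noncomputable def varPure (F : CubicFormula V C) (ε : ℝ) (q : C → Option (Fin 3) → ℝ) (v : V)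
    (b : Option Bool) : ℝ :=
  ∑ c : C, ∑ j : Fin 3, ∑ s : Option (Fin 3),
    (if F.var c j = v then q c s * edgeVarPay ε j s b else 0)

/-- A valid mixed strategy profile of the game G'. -/
def IsProfile (p : V → Option Bool → ℝ) (q : C → Option (Fin 3) → ℝ) : Prop :=
  (∀ v b, 0 ≤ p v b) ∧ (∀ v, ∑ b, p v b = 1) ∧
  (∀ c s, 0 ≤ q c s) ∧ (∀ c, ∑ s, q c s = 1)

/-- An ε-well-supported Nash equilibrium of G': every pure strategy played with
positive probability is an ε-best response. -/
def IsWSNE (F : CubicFormula V C) (ε cc κ : ℝ) (p : V → Option Bool → ℝ)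
    (q : C → Option (Fin 3) → ℝ) : Prop :=
  IsProfile p q ∧
  (∀ v b, 0 < p v b → ∀ b', varPure F ε q v b ≥ varPure F ε q v b' - ε) ∧
  (∀ c s, 0 < q c s → ∀ s', clausePure F cc κ p c s ≥ clausePure F cc κ p c s' - ε)


open Finset

section Helpers

variable {V C : Type} [Fintype V] [Fintype C] [DecidableEq V] [DecidableEq C]

lemma sum_optBool (f : Option Bool → ℝ) :
    ∑ b : Option Bool, f b = f none + (f (some true) + f (some false)) := by
  rw [Fintype.sum_option, Fintype.sum_bool]

lemma sum_optFin (f : Option (Fin 3) → ℝ) :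
    ∑ s : Option (Fin 3), f s = f none + (f (some 0) + f (some 1) + f (some 2)) := by
  rw [Fintype.sum_option, Fin.sum_univ_three]

/-- The occurrences of variable `v` as clause positions. -/
def occ (F : CubicFormula V C) (v : V) : Finset (C × Fin 3) :=
  Finset.univ.filter (fun cj : C × Fin 3 => F.var cj.1 cj.2 = v)

lemma clausePure_none (F : CubicFormula V C) (cc κ : ℝ) (p : V → Option Bool → ℝ)
    (hp : ∀ v, ∑ b, p v b = 1) (c : C) :
    clausePure F cc κ p c none = 1 := by
  unfold clausePure
  have h : ∀ j : Fin 3,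
      ∑ b : Option Bool, p (F.var c j) b * edgeClausePay cc κ j none b = 1/3 := by
    intro j
    have he : ∀ b, edgeClausePay cc κ j none b = 1/3 := fun b => rfl
    calc ∑ b : Option Bool, p (F.var c j) b * edgeClausePay cc κ j none b
        = ∑ b : Option Bool, p (F.var c j) b * (1/3) :=
          Finset.sum_congr rfl (fun b _ => by rw [he])
      _ = (∑ b : Option Bool, p (F.var c j) b) * (1/3) := by rw [Finset.sum_mul]
      _ = 1/3 := by rw [hp]; ring
  rw [Fin.sum_univ_three, h, h, h]; norm_num

lemma clausePure_some (F : CubicFormula V C) (cc κ : ℝ) (p : V → Option Bool → ℝ)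
    (c : C) (t : Fin 3) :
    clausePure F cc κ p c (some t) =
      p (F.var c t) (some true) * κ +
        (∑ j : Fin 3, p (F.var c j) (some false)) * (cc * κ) := by
  unfold clausePure
  have h : ∀ j : Fin 3,
      ∑ b : Option Bool, p (F.var c j) b * edgeClausePay cc κ j (some t) b
        = p (F.var c j) (some true) * (if t = j then κ else 0)
          + p (F.var c j) (some false) * (cc * κ) := by
    intro j
    rw [sum_optBool]
    simp [edgeClausePay]
  rw [Fin.sum_univ_three, h, h, h, Fin.sum_univ_three]
  fin_cases t <;> simp <;> ring

lemma varPure_eq (F : CubicFormula V C) (ε : ℝ) (q : C → Option (Fin 3) → ℝ) (v : V)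
    (b : Option Bool) :
    varPure F ε q v b =
      ∑ cj ∈ occ F v, ∑ s : Option (Fin 3), q cj.1 s * edgeVarPay ε cj.2 s b := by
  unfold varPure occ
  rw [Finset.sum_filter, Fintype.sum_prod_type]
  refine Finset.sum_congr rfl (fun c _ => Finset.sum_congr rfl (fun j _ => ?_))
  by_cases h : F.var c j = v <;> simp [h]

lemma varPure_none (F : CubicFormula V C) (hcub : Cubic F) (ε : ℝ)
    (q : C → Option (Fin 3) → ℝ) (hq : ∀ c, ∑ s, q c s = 1) (v : V) :
    varPure F ε q v none = 1 := by
  rw [varPure_eq]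
  have h : ∀ cj : C × Fin 3,
      ∑ s : Option (Fin 3), q cj.1 s * edgeVarPay ε cj.2 s none = 1/3 := by
    intro cj
    have he : ∀ s, edgeVarPay ε cj.2 s none = 1/3 := fun s => rfl
    calc ∑ s : Option (Fin 3), q cj.1 s * edgeVarPay ε cj.2 s none
        = ∑ s : Option (Fin 3), q cj.1 s * (1/3) :=
          Finset.sum_congr rfl (fun s _ => by rw [he])
      _ = (∑ s : Option (Fin 3), q cj.1 s) * (1/3) := by rw [Finset.sum_mul]
      _ = 1/3 := by rw [hq]; ring
  rw [Finset.sum_congr rfl (fun cj _ => h cj), Finset.sum_const]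
  rw [show (occ F v).card = 3 from hcub v]
  norm_num

lemma varPure_true (F : CubicFormula V C) (ε : ℝ) (q : C → Option (Fin 3) → ℝ) (v : V) :
    varPure F ε q v (some true) =
      (∑ cj ∈ occ F v, q cj.1 (some cj.2)) * (1/3 - ε/3) := by
  rw [varPure_eq, Finset.sum_mul]
  refine Finset.sum_congr rfl fun cj _ => ?_
  have he : ∀ s, edgeVarPay ε cj.2 s (some true)
      = if s = some cj.2 then 1/3 - ε/3 else 0 := fun s => rfl
  simp only [he, mul_ite, mul_zero, Finset.sum_ite_eq', Finset.mem_univ, if_true]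

lemma varPure_false (F : CubicFormula V C) (ε : ℝ) (q : C → Option (Fin 3) → ℝ) (v : V) :
    varPure F ε q v (some false) =
      (∑ cj ∈ occ F v, ∑ t : Fin 3, (if t = cj.2 then 0 else q cj.1 (some t)))
        * (1/3 - ε/3) := by
  rw [varPure_eq, Finset.sum_mul]
  refine Finset.sum_congr rfl fun cj _ => ?_
  rw [Fintype.sum_option]
  have h0 : edgeVarPay ε cj.2 none (some false) = 0 := rfl
  have hs : ∀ t : Fin 3, edgeVarPay ε cj.2 (some t) (some false)
      = if t = cj.2 then 0 else 1/3 - ε/3 := fun t => rfl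
  rw [h0, mul_zero, zero_add, Finset.sum_mul]
  refine Finset.sum_congr rfl fun t _ => ?_
  rw [hs t]
  by_cases h : t = cj.2
  · rw [if_pos h, if_pos h, mul_zero, zero_mul]
  · rw [if_neg h, if_neg h]

lemma all_one {ι : Type*} [DecidableEq ι] {s : Finset ι} {f : ι → ℝ}
    (h1 : ∀ i ∈ s, f i ≤ 1) (h : (s.card : ℝ) ≤ ∑ i ∈ s, f i) :
    ∀ i ∈ s, 1 ≤ f i := by
  intro i hi
  have hsplit : ∑ j ∈ s, f j = f i + ∑ j ∈ s.erase i, f j :=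
    (Finset.add_sum_erase s f hi).symm
  have hb : ∑ j ∈ s.erase i, f j ≤ (s.erase i).card • (1:ℝ) :=
    Finset.sum_le_card_nsmul _ _ _ (fun j hj => h1 j (Finset.mem_of_mem_erase hj))
  rw [Finset.card_erase_of_mem hi, nsmul_eq_mul, mul_one] at hb
  have hpos : 1 ≤ s.card := Finset.one_le_card.mpr ⟨i, hi⟩
  have hcast : ((s.card - 1 : ℕ) : ℝ) = (s.card : ℝ) - 1 := by
    push_cast [Nat.cast_sub hpos]; ring
  rw [hcast] at hb
  linarith [hsplit ▸ h]

lemma arith_core {cc κ T1 F1 T2 F2 N2 T3 F3 N3 S : ℝ}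
    (hcc0 : 0 < cc) (hcc1 : cc < 1) (hκ : 0 < κ)
    (h1 : T1 + F1 ≤ 1) (h2 : N2 + (T2 + F2) = 1) (h3 : N3 + (T3 + F3) = 1)
    (hT1 : 0 ≤ T1) (hF1 : 0 ≤ F1)
    (hT2 : 0 ≤ T2) (hF2 : 0 ≤ F2) (hN2 : 0 ≤ N2)
    (hT3 : 0 ≤ T3) (hF3 : 0 ≤ F3) (hN3 : 0 ≤ N3)
    (hS : S = F1 + F2 + F3)
    (h : κ + 2 * cc * κ ≤ T1 * κ + S * (cc * κ)) :
    T1 = 1 ∧ F2 = 1 ∧ F3 = 1 := by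
  subst hS
  have hck : 0 < cc * κ := mul_pos hcc0 hκ
  have hF2le : F2 ≤ 1 := by linarith
  have hF3le : F3 ≤ 1 := by linarith
  have k1 : 0 ≤ (1 - F2) * (cc * κ) := mul_nonneg (by linarith) hck.le
  have k2 : 0 ≤ (1 - F3) * (cc * κ) := mul_nonneg (by linarith) hck.le
  have k3 : 0 ≤ (1 - T1 - F1) * κ := mul_nonneg (by linarith) hκ.le
  have k4 : 0 ≤ F1 * ((1 - cc) * κ) := mul_nonneg hF1 (mul_nonneg (by linarith) hκ.le)
  have key : κ ≤ T1 * κ + F1 * (cc * κ) := by nlinarith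
  have e1 : F1 * ((1 - cc) * κ) ≤ 0 := by nlinarith
  have hF1z : F1 = 0 := by
    rcases mul_eq_zero.mp (le_antisymm e1 k4) with hh | hh
    · exact hh
    · exfalso
      have : 0 < (1 - cc) * κ := mul_pos (by linarith) hκ
      linarith
  have hz : F1 * (cc * κ) = 0 := by rw [hF1z]; ring
  have hT1e : T1 = 1 := by
    have h2' : (1 - T1) * κ ≤ 0 * κ := by nlinarith
    have := (mul_le_mul_iff_of_pos_right hκ).mp h2'
    linarith
  have hT : T1 * κ = κ := by rw [hT1e]; ring
  have hsum23 : 2 * (cc * κ) ≤ (F2 + F3) * (cc * κ) := by nlinarith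
  have h23 : 2 ≤ F2 + F3 := (mul_le_mul_iff_of_pos_right hck).mp hsum23
  exact ⟨hT1e, by linarith, by linarith⟩

lemma exists_some_pos {α : Type*} [Fintype α] (f : Option α → ℝ)
    (h0 : ∀ s, 0 ≤ f s) (h1 : ∑ s, f s = 1) (h : f none < 1) :
    ∃ a, 0 < f (some a) := by
  by_contra hc
  push_neg at hc
  have hz : ∀ a, f (some a) = 0 := fun a => le_antisymm (hc a) (h0 _)
  rw [Fintype.sum_option] at h1
  simp only [hz, Finset.sum_const_zero, add_zero] at h1
  linarith

lemma clause_forced (F : CubicFormula V C) (cc κ : ℝ) (hcc0 : 0 < cc) (hcc1 : cc < 1)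
    (hκ : 0 < κ) (p : V → Option Bool → ℝ) (hp0 : ∀ v b, 0 ≤ p v b)
    (hp1 : ∀ v, ∑ b, p v b = 1) (c : C) (t : Fin 3)
    (h : κ + 2 * cc * κ ≤ clausePure F cc κ p c (some t)) :
    p (F.var c t) (some true) = 1 ∧ ∀ j, j ≠ t → p (F.var c j) (some false) = 1 := by
  rw [clausePure_some, Fin.sum_univ_three] at h
  have hsum : ∀ j : Fin 3, p (F.var c j) none +
      (p (F.var c j) (some true) + p (F.var c j) (some false)) = 1 := by
    intro j; rw [← sum_optBool]; exact hp1 _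
  have h1sum : ∀ j : Fin 3,
      p (F.var c j) (some true) + p (F.var c j) (some false) ≤ 1 := by
    intro j; have := hsum j; have := hp0 (F.var c j) none; linarith
  fin_cases t <;>
    simp only [Fin.zero_eta, Fin.mk_one, Fin.isValue, Fin.reduceFinMk] at h ⊢
  · obtain ⟨a, b1, b2⟩ := arith_core hcc0 hcc1 hκ (h1sum 0) (hsum 1) (hsum 2)
      (hp0 _ _) (hp0 _ _) (hp0 _ _) (hp0 _ _) (hp0 _ _) (hp0 _ _) (hp0 _ _) (hp0 _ _)
      (by ring) h
    refine ⟨a, ?_⟩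
    intro j hj; fin_cases j
    · simp at hj
    · exact b1
    · exact b2
  · obtain ⟨a, b1, b2⟩ := arith_core hcc0 hcc1 hκ (h1sum 1) (hsum 0) (hsum 2)
      (hp0 _ _) (hp0 _ _) (hp0 _ _) (hp0 _ _) (hp0 _ _) (hp0 _ _) (hp0 _ _) (hp0 _ _)
      (by ring) h
    refine ⟨a, ?_⟩
    intro j hj; fin_cases j
    · exact b1
    · simp at hj
    · exact b2
  · obtain ⟨a, b1, b2⟩ := arith_core hcc0 hcc1 hκ (h1sum 2) (hsum 0) (hsum 1)
      (hp0 _ _) (hp0 _ _) (hp0 _ _) (hp0 _ _) (hp0 _ _) (hp0 _ _) (hp0 _ _) (hp0 _ _)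
      (by ring) h
    refine ⟨a, ?_⟩
    intro j hj; fin_cases j
    · exact b1
    · exact b2
    · simp at hj

lemma single_le_one {α : Type*} [Fintype α] (f : α → ℝ) (h0 : ∀ s, 0 ≤ f s)
    (h1 : ∑ s, f s = 1) (a : α) : f a ≤ 1 := by
  have h := Finset.single_le_sum (fun s _ => h0 s) (Finset.mem_univ a)
  rw [h1] at h
  exact h

lemma var_forced_true (F : CubicFormula V C) (hcub : Cubic F) {ε : ℝ} (hε1 : ε < 1)
    (q : C → Option (Fin 3) → ℝ) (hq0 : ∀ c s, 0 ≤ q c s) (hq1 : ∀ c, ∑ s, q c s = 1)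
    (v : V) (h : 1 - ε ≤ varPure F ε q v (some true)) :
    ∀ c j, F.var c j = v → q c none = 0 := by
  rw [varPure_true] at h
  have hfac : (0:ℝ) < 1/3 - ε/3 := by linarith
  have hcard : (occ F v).card = 3 := hcub v
  have hterm : ∀ cj ∈ occ F v, q cj.1 (some cj.2) ≤ 1 := fun cj _ =>
    single_le_one (q cj.1) (hq0 cj.1) (hq1 cj.1) (some cj.2)
  have hsumge : ((occ F v).card : ℝ) ≤ ∑ cj ∈ occ F v, q cj.1 (some cj.2) := by
    rw [hcard]
    push_cast
    nlinarith [h, hfac]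
  have hall := all_one hterm hsumge
  intro c j hcj
  have hmem : (c, j) ∈ occ F v := by
    simp only [occ, Finset.mem_filter, Finset.mem_univ, true_and]
    exact hcj
  have h1le : 1 ≤ q c (some j) := hall (c, j) hmem
  have hs := hq1 c
  rw [Fintype.sum_option] at hs
  have hsing : q c (some j) ≤ ∑ t : Fin 3, q c (some t) :=
    Finset.single_le_sum (fun t _ => hq0 c (some t)) (Finset.mem_univ j)
  exact le_antisymm (by linarith) (hq0 c none)

lemma var_forced_false (F : CubicFormula V C) (hcub : Cubic F) {ε : ℝ} (hε1 : ε < 1)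
    (q : C → Option (Fin 3) → ℝ) (hq0 : ∀ c s, 0 ≤ q c s) (hq1 : ∀ c, ∑ s, q c s = 1)
    (v : V) (h : 1 - ε ≤ varPure F ε q v (some false)) :
    ∀ c j, F.var c j = v → q c none = 0 := by
  rw [varPure_false] at h
  have hfac : (0:ℝ) < 1/3 - ε/3 := by linarith
  have hcard : (occ F v).card = 3 := hcub v
  have gsplit : ∀ cj : C × Fin 3,
      (∑ t : Fin 3, (if t = cj.2 then 0 else q cj.1 (some t))) + q cj.1 (some cj.2)
        = ∑ t : Fin 3, q cj.1 (some t) := by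
    intro cj
    have h2 : q cj.1 (some cj.2)
        = ∑ t : Fin 3, (if t = cj.2 then q cj.1 (some t) else 0) := by
      rw [Finset.sum_ite_eq' Finset.univ cj.2 (fun t => q cj.1 (some t))]
      simp
    rw [h2, ← Finset.sum_add_distrib]
    refine Finset.sum_congr rfl fun t _ => ?_
    by_cases ht : t = cj.2 <;> simp [ht]
  have hterm : ∀ cj ∈ occ F v,
      (∑ t : Fin 3, (if t = cj.2 then 0 else q cj.1 (some t))) ≤ 1 := by
    intro cj _
    have hs := hq1 cj.1
    rw [Fintype.sum_option] at hs
    have hgs := gsplit cj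
    have hn := hq0 cj.1 none
    have hj := hq0 cj.1 (some cj.2)
    linarith
  have hsumge : ((occ F v).card : ℝ) ≤
      ∑ cj ∈ occ F v, ∑ t : Fin 3, (if t = cj.2 then 0 else q cj.1 (some t)) := by
    rw [hcard]
    push_cast
    nlinarith [h, hfac]
  have hall := all_one hterm hsumge
  intro c j hcj
  have hmem : (c, j) ∈ occ F v := by
    simp only [occ, Finset.mem_filter, Finset.mem_univ, true_and]
    exact hcj
  have h1le := hall (c, j) hmem
  have hgs := gsplit (c, j)
  simp only at h1le hgs
  have hs := hq1 c
  rw [Fintype.sum_option] at hs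
  have hj := hq0 c (some j)
  exact le_antisymm (by linarith) (hq0 c none)

end Helpers

/-- If the connected cubic formula φ has no 1-in-3 satisfying assignment, then the
all-Out profile is an ε-WSNE of G' and it is the unique ε-WSNE: every ε-WSNE has
every player playing Out. -/
theorem stmt_7 (F : CubicFormula V C) (hcub : Cubic F)
    (hconn : (interactionGraph F).Connected)
    (hno : ¬∃ α : V → Bool, OneInThree F α)
    (ε cc κ : ℝ) (hε0 : 0 < ε) (hε1 : ε < 1)
    (hcc0 : max (1 - 3 * ε / 2) 0 < cc) (hcc1 : cc < 1)
    (hκ : κ = (1 - ε) / (1 + 2 * cc)) :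
    IsWSNE F ε cc κ (fun _ b => if b = none then 1 else 0)
      (fun _ s => if s = none then 1 else 0) ∧
    ∀ (p : V → Option Bool → ℝ) (q : C → Option (Fin 3) → ℝ),
      IsWSNE F ε cc κ p q → (∀ v, p v none = 1) ∧ (∀ c, q c none = 1) := by
  classical
  have hcc0' : 0 < cc := lt_of_le_of_lt (le_max_right _ _) hcc0
  have hden : (0:ℝ) < 1 + 2 * cc := by linarith
  have hκpos : 0 < κ := by rw [hκ]; exact div_pos (by linarith) hden
  have hκeq : κ + 2 * cc * κ = 1 - ε := by
    have hne : (1 + 2 * cc) ≠ 0 := ne_of_gt hden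
    rw [hκ]
    field_simp
  set p0 : V → Option Bool → ℝ := fun _ b => if b = none then 1 else 0 with hp0def
  set q0 : C → Option (Fin 3) → ℝ := fun _ s => if s = none then 1 else 0 with hq0def
  have hp0sum : ∀ v, ∑ b, p0 v b = 1 := by
    intro v; rw [sum_optBool]; simp [hp0def]
  have hq0sum : ∀ c, ∑ s, q0 c s = 1 := by
    intro c; rw [sum_optFin]; simp [hq0def]
  constructor
  · refine ⟨⟨fun v b => by simp only [hp0def]; split <;> norm_num, hp0sum,
      fun c s => by simp only [hq0def]; split <;> norm_num, hq0sum⟩, ?_, ?_⟩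
    · intro v b hb b'
      have hbn : b = none := by
        by_contra hc
        simp only [hp0def, if_neg hc] at hb
        exact lt_irrefl 0 hb
      subst hbn
      rw [varPure_none F hcub ε q0 hq0sum v]
      have h1 : varPure F ε q0 v (some true) = 0 := by
        rw [varPure_true]
        have hz : ∀ cj ∈ occ F v, q0 cj.1 (some cj.2) = 0 := by
          intro cj _; simp [hq0def]
        rw [Finset.sum_congr rfl hz]
        simp
      have h2 : varPure F ε q0 v (some false) = 0 := by
        rw [varPure_false]
        have hz : ∀ cj ∈ occ F v,
            (∑ t : Fin 3, (if t = cj.2 then 0 else q0 cj.1 (some t))) = 0 := by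
          intro cj _
          refine Finset.sum_eq_zero fun t _ => ?_
          by_cases ht : t = cj.2 <;> simp [hq0def, ht]
        rw [Finset.sum_congr rfl hz]
        simp
      match b' with
      | none => rw [varPure_none F hcub ε q0 hq0sum v]; linarith
      | some true => rw [h1]; linarith
      | some false => rw [h2]; linarith
    · intro c s hs s'
      have hsn : s = none := by
        by_contra hc
        simp only [hq0def, if_neg hc] at hs
        exact lt_irrefl 0 hs
      subst hsn
      rw [clausePure_none F cc κ p0 hp0sum c]
      match s' with
      | none => rw [clausePure_none F cc κ p0 hp0sum c]; linarith
      | some t =>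
          rw [clausePure_some]
          have e1 : p0 (F.var c t) (some true) = 0 := by simp [hp0def]
          have e2 : ∀ j : Fin 3, p0 (F.var c j) (some false) = 0 := by
            intro j; simp [hp0def]
          rw [e1, Fin.sum_univ_three, e2 0]
          linarith
  · intro p q hw
    obtain ⟨⟨hpge, hp1, hqge, hq1⟩, hvar, hcl⟩ := hw
    have clauseStep : ∀ c t, 0 < q c (some t) →
        p (F.var c t) (some true) = 1 ∧
          ∀ j, j ≠ t → p (F.var c j) (some false) = 1 := by
      intro c t ht
      refine clause_forced F cc κ hcc0' hcc1 hκpos p hpge hp1 c t ?_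
      have h := hcl c (some t) ht none
      rw [clausePure_none F cc κ p hp1 c] at h
      linarith
    have varStep : ∀ v, p v none < 1 → ∀ c j, F.var c j = v → q c none = 0 := by
      intro v hv
      obtain ⟨b, hb⟩ := exists_some_pos (p v) (hpge v) (hp1 v) hv
      have h := hvar v (some b) hb none
      rw [varPure_none F hcub ε q hq1 v] at h
      cases b with
      | false => exact var_forced_false F hcub hε1 q hqge hq1 v (by linarith)
      | true => exact var_forced_true F hcub hε1 q hqge hq1 v (by linarith)
    have pnone_lt : ∀ v (b : Bool), p v (some b) = 1 → p v none < 1 := by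
      intro v b h
      have hs := hp1 v
      rw [sum_optBool] at hs
      have h1 := hpge v (some true)
      have h2 := hpge v (some false)
      cases b <;> linarith
    set Active : V ⊕ C → Prop :=
      fun x => Sum.elim (fun v => p v none < 1) (fun c => q c none < 1) x with hAct
    have step : ∀ x y, (interactionGraph F).Adj x y → Active x → Active y := by
      intro x y hxy hx
      simp only [interactionGraph, SimpleGraph.fromRel_adj] at hxy
      obtain ⟨hne, hrel⟩ := hxy
      cases x with
      | inl v =>
        cases y with
        | inl v' => rcases hrel with h | h <;> exact h.elim
        | inr c =>
          obtain ⟨j, hj⟩ : ∃ j, F.var c j = v := by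
            rcases hrel with h | h
            · exact h
            · exact h.elim
          have hz := varStep v hx c j hj
          show q c none < 1
          rw [hz]; norm_num
      | inr c =>
        cases y with
        | inr c' => rcases hrel with h | h <;> exact h.elim
        | inl v =>
          obtain ⟨j, hj⟩ : ∃ j, F.var c j = v := by
            rcases hrel with h | h
            · exact h.elim
            · exact h
          obtain ⟨t, ht⟩ := exists_some_pos (q c) (hqge c) (hq1 c) hx
          obtain ⟨h1, h2⟩ := clauseStep c t ht
          show p v none < 1
          by_cases hjt : j = t
          · subst hjt
            exact pnone_lt v true (hj ▸ h1)
          · exact pnone_lt v false (hj ▸ h2 j hjt)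
    have reach : ∀ (x y : V ⊕ C), (interactionGraph F).Walk x y →
        Active x → Active y := by
      intro x y w
      induction w with
      | nil => exact id
      | cons h _ ih => exact fun hx => ih (step _ _ h hx)
    have noactive : ∀ x, ¬ Active x := by
      intro x hx
      have hall : ∀ y, Active y := by
        intro y
        obtain ⟨w⟩ := hconn.preconnected x y
        exact reach x y w hx
      set α : V → Bool := fun v => if 1 ≤ p v (some true) then true else false with hα
      have hone : OneInThree F α := by
        intro c
        obtain ⟨t, ht⟩ := exists_some_pos (q c) (hqge c) (hq1 c) (hall (Sum.inr c))
        obtain ⟨h1, h2⟩ := clauseStep c t ht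
        have hfil : Finset.univ.filter (fun j : Fin 3 => α (F.var c j) = true) = {t} := by
          ext j
          simp only [Finset.mem_filter, Finset.mem_univ, true_and, Finset.mem_singleton]
          constructor
          · intro hj
            by_contra hne
            have hv := h2 j hne
            have hlt : ¬ (1 ≤ p (F.var c j) (some true)) := by
              have hs := hp1 (F.var c j)
              rw [sum_optBool] at hs
              have hn := hpge (F.var c j) none
              push_neg
              linarith
            have hfalse : α (F.var c j) = false := if_neg hlt
            rw [hfalse] at hj
            exact Bool.false_ne_true hj
          · intro hj
            subst hj
            exact if_pos h1.ge
        rw [hfil]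
        exact Finset.card_singleton t
      exact hno ⟨α, hone⟩
    constructor
    · intro v
      have h1 : ¬ (p v none < 1) := noactive (Sum.inl v)
      have hs := hp1 v
      rw [sum_optBool] at hs
      have h2 := hpge v (some true)
      have h3 := hpge v (some false)
      have h4 := not_lt.mp h1
      linarith
    · intro c
      have h1 : ¬ (q c none < 1) := noactive (Sum.inr c)
      have hs := hq1 c
      rw [sum_optFin] at hs
      have h2 := hqge c (some 0)
      have h3 := hqge c (some 1)
      have h4 := hqge c (some 2)
      have h5 := not_lt.mp h1
      linarith


end Stmt7
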